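/- min{𝔡, 𝔯} ≤ non*(Z₀). -/

import Mathlib

open Filter Set Cardinal

/-- A set of naturals has asymptotic density zero. -/
def DensityZero (A : Set ℕ) : Prop :=
  Tendsto (fun n : ℕ => ((A ∩ Set.Iio n).ncard : ℝ) / n) atTop (nhds 0)

/-- `non*(Z₀)`: least size of a family of infinite subsets of `ℕ` such that every
density-zero set has finite intersection with some member of the family. -/
noncomputable def nonStarZ0 : Cardinal :=
  sInf { κc : Cardinal | ∃ F : Set (Set ℕ), #F = κc ∧ (∀ a ∈ F, a.Infinite) ∧
    ∀ b : Set ℕ, DensityZero b → ∃ a ∈ F, (a ∩ b).Finite }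

/-- The dominating number `𝔡`. -/
noncomputable def frakD : Cardinal :=
  sInf { κc : Cardinal | ∃ D : Set (ℕ → ℕ), #D = κc ∧
    ∀ f : ℕ → ℕ, ∃ g ∈ D, ∀ᶠ n in atTop, f n ≤ g n }

/-- The reaping number `𝔯`. -/
noncomputable def frakR : Cardinal :=
  sInf { κc : Cardinal | ∃ R : Set (Set ℕ), #R = κc ∧ (∀ a ∈ R, a.Infinite) ∧
    ∀ x : Set ℕ, ∃ a ∈ R, (a \ x).Finite ∨ (a ∩ x).Finite }

lemma exists_splitter {R : Set (Set ℕ)} (hinf : ∀ a ∈ R, a.Infinite) (h : #R < frakR) :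
    ∃ x : Set ℕ, ∀ a ∈ R, (a ∩ x).Infinite ∧ (a \ x).Infinite := by
  by_contra hc
  push_neg at hc
  have : frakR ≤ #R := by
    apply csInf_le'
    refine ⟨R, rfl, hinf, fun x => ?_⟩
    obtain ⟨a, ha, hax⟩ := hc x
    exact ⟨a, ha, by
      by_cases h1 : (a ∩ x).Infinite
      · exact Or.inl (hax h1)
      · exact Or.inr (Set.not_infinite.mp h1)⟩
  exact absurd h (not_lt.mpr this)
attribute [local instance 0] Classical.propDecidable
def W (k : ℕ) : Set ℕ := Set.Ico (2^k) (2^(k+1))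
def Mch (x : ℕ → Set ℕ) (a : Set ℕ) (i k : ℕ) : Prop :=
  ∃ m ∈ a, m ∈ W k ∧ ∀ j < min i k, (m.testBit j = true ↔ k ∈ x j)
def Eb (x : ℕ → Set ℕ) (a : Set ℕ) (i k : ℕ) (v : Bool) : Prop :=
  ∃ m ∈ a, m ∈ W k ∧ (∀ j < i, (m.testBit j = true ↔ k ∈ x j)) ∧ m.testBit i = v
def SetA (x : ℕ → Set ℕ) (a : Set ℕ) (i : ℕ) : Set ℕ :=
  {k | i < k ∧ Eb x a i k true ∧ ¬ Eb x a i k false}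
def SetB (x : ℕ → Set ℕ) (a : Set ℕ) (i : ℕ) : Set ℕ :=
  {k | i < k ∧ Eb x a i k false ∧ ¬ Eb x a i k true}
noncomputable def Dch (x : ℕ → Set ℕ) (a : Set ℕ) (i : ℕ) : Set ℕ :=
  if (SetA x a i).Infinite then SetA x a i else SetB x a i
def Fam (F : Set (Set ℕ)) (x : ℕ → Set ℕ) (i : ℕ) : Set (Set ℕ) :=
  {D | (∃ a ∈ F, D = Dch x a i) ∧ D.Infinite}
noncomputable def pick (F : Set (Set ℕ)) (x : ℕ → Set ℕ) (i : ℕ) : Set ℕ :=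
  if h : ∃ y : Set ℕ, ∀ D ∈ Fam F x i, (D ∩ y).Infinite ∧ (D \ y).Infinite
  then h.choose else ∅
noncomputable def Xaux (F : Set (Set ℕ)) : ℕ → ℕ → Set ℕ
  | 0 => fun _ => ∅
  | (i+1) => fun j => if j = i then pick F (Xaux F i) i else Xaux F i j
noncomputable def XX (F : Set (Set ℕ)) (j : ℕ) : Set ℕ := Xaux F (j+1) j
def Sst (x : ℕ → Set ℕ) (a : Set ℕ) (i : ℕ) : Set ℕ := {k | Mch x a i k}
lemma Xaux_eq (F : Set (Set ℕ)) : ∀ i j, j < i → Xaux F i j = XX F j := by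
  intro i
  induction i with
  | zero => intro j hj; omega
  | succ i ih =>
    intro j hj
    by_cases h : j = i
    · subst h; rfl
    · have hji : j < i := by omega
      show (if j = i then pick F (Xaux F i) i else Xaux F i j) = XX F j
      rw [if_neg h]
      exact ih j hji
lemma Eb_congr {x x' : ℕ → Set ℕ} {a : Set ℕ} {i : ℕ} (h : ∀ j < i, x j = x' j)
    (k : ℕ) (v : Bool) : Eb x a i k v ↔ Eb x' a i k v := by
  constructor
  · rintro ⟨m, hm, hW, hb, hbit⟩
    exact ⟨m, hm, hW, fun j hj => by rw [← h j hj]; exact hb j hj, hbit⟩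
  · rintro ⟨m, hm, hW, hb, hbit⟩
    exact ⟨m, hm, hW, fun j hj => by rw [h j hj]; exact hb j hj, hbit⟩
lemma Dch_congr {x x' : ℕ → Set ℕ} {a : Set ℕ} {i : ℕ} (h : ∀ j < i, x j = x' j) :
    Dch x a i = Dch x' a i := by
  have hA : SetA x a i = SetA x' a i := by
    ext k; simp only [SetA, Set.mem_setOf_eq, Eb_congr h]
  have hB : SetB x a i = SetB x' a i := by
    ext k; simp only [SetB, Set.mem_setOf_eq, Eb_congr h]
  rw [Dch, Dch, hA, hB]

-- NEW PART BELOW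

lemma pick_spec {F : Set (Set ℕ)} (hr : #F < frakR) (x : ℕ → Set ℕ) (i : ℕ) :
    ∀ D ∈ Fam F x i, (D ∩ pick F x i).Infinite ∧ (D \ pick F x i).Infinite := by
  have hsub : Fam F x i ⊆ (fun a => Dch x a i) '' F := by
    rintro D ⟨⟨a, ha, rfl⟩, -⟩
    exact ⟨a, ha, rfl⟩
  have hcard : #(Fam F x i) < frakR :=
    lt_of_le_of_lt (le_trans (mk_le_mk_of_subset hsub) mk_image_le) hr
  have hinf : ∀ D ∈ Fam F x i, D.Infinite := fun D hD => hD.2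
  have hex := exists_splitter hinf hcard
  rw [pick, dif_pos hex]
  exact hex.choose_spec

lemma mem_W_iff {m k : ℕ} : m ∈ W k ↔ 2^k ≤ m ∧ m < 2^(k+1) := Iff.rfl

lemma log_eq_of_mem_W {m k : ℕ} (h : m ∈ W k) : Nat.log 2 m = k :=
  Nat.log_eq_of_pow_le_of_lt_pow h.1 h.2

lemma mem_W_log {m : ℕ} (h : 1 ≤ m) : m ∈ W (Nat.log 2 m) :=
  ⟨Nat.pow_log_le_self 2 (by omega), Nat.lt_pow_succ_log_self (by norm_num) m⟩

lemma sst_base {a : Set ℕ} (ha : a.Infinite) (x : ℕ → Set ℕ) : (Sst x a 0).Infinite := by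
  apply Set.infinite_of_not_bddAbove
  rw [not_bddAbove_iff]
  intro N
  obtain ⟨m, hm, hmgt⟩ := ha.exists_gt (2^(N+1))
  have hm1 : 1 ≤ m := by have := Nat.one_le_two_pow (n := N+1); omega
  refine ⟨Nat.log 2 m, ⟨m, hm, mem_W_log hm1, fun j hj => by omega⟩, ?_⟩
  have : N + 1 ≤ Nat.log 2 m := by
    rw [Nat.le_log_iff_pow_le (by norm_num) (by omega)]
    omega
  omega

lemma Eb_to_Mch {x : ℕ → Set ℕ} {a : Set ℕ} {i k : ℕ} {v : Bool}
    (h : Eb x a i k v) (hik : i < k) (hv : v = true → k ∈ x i)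
    (hv' : v = false → k ∉ x i) : Mch x a (i+1) k := by
  obtain ⟨m, hm, hW, hb, hbit⟩ := h
  refine ⟨m, hm, hW, fun j hj => ?_⟩
  have hj' : j < i + 1 := lt_of_lt_of_le hj (min_le_left _ _)
  rcases Nat.lt_or_ge j i with h1 | h1
  · exact hb j h1
  · have : j = i := by omega
    subst this
    cases v with
    | true => simp [hbit, hv rfl]
    | false => simp [hbit, hv' rfl]

lemma sst_step {F : Set (Set ℕ)} (hr : #F < frakR) {a : Set ℕ} (ha : a ∈ F) (i : ℕ)
    (hinf : (Sst (XX F) a i).Infinite) : (Sst (XX F) a (i+1)).Infinite := by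
  set x := XX F with hx
  have hagree : ∀ j < i, Xaux F i j = x j := fun j hj => Xaux_eq F i j hj
  have hXi : x i = pick F (Xaux F i) i := by
    rw [hx]
    show (if i = i then pick F (Xaux F i) i else Xaux F i i) = _
    rw [if_pos rfl]
  have hDeq : Dch (Xaux F i) a i = Dch x a i := Dch_congr hagree
  by_cases hA : (SetA x a i).Infinite
  · have hmem : Dch (Xaux F i) a i ∈ Fam F (Xaux F i) i := by
      refine ⟨⟨a, ha, rfl⟩, ?_⟩
      rw [hDeq, Dch, if_pos hA]; exact hA
    have := (pick_spec hr (Xaux F i) i _ hmem).1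
    rw [hDeq, Dch, if_pos hA, ← hXi] at this
    refine this.mono ?_
    rintro k ⟨⟨hik, hT, -⟩, hkx⟩
    exact Eb_to_Mch hT hik (fun _ => hkx) (by simp)
  · by_cases hB : (SetB x a i).Infinite
    · have hmem : Dch (Xaux F i) a i ∈ Fam F (Xaux F i) i := by
        refine ⟨⟨a, ha, rfl⟩, ?_⟩
        rw [hDeq, Dch, if_neg hA]; exact hB
      have := (pick_spec hr (Xaux F i) i _ hmem).2
      rw [hDeq, Dch, if_neg hA, ← hXi] at this
      refine this.mono ?_
      rintro k ⟨⟨hik, hFst, -⟩, hkx⟩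
      exact Eb_to_Mch hFst hik (by simp) (fun _ => hkx)
    · rw [Set.not_infinite] at hA hB
      have h3 : (Sst x a i \ (Set.Iic i ∪ SetA x a i ∪ SetB x a i)).Infinite :=
        hinf.diff (((Set.finite_Iic i).union hA).union hB)
      refine h3.mono ?_
      rintro k ⟨hk, hnk⟩
      simp only [Set.mem_union, not_or, Set.mem_Iic, not_le] at hnk
      obtain ⟨⟨hgt, hnA⟩, hnB⟩ := hnk
      obtain ⟨m, hm, hW, hb⟩ := hk
      have hmini : min i k = i := by omega
      rw [hmini] at hb
      have hEb : Eb x a i k (m.testBit i) := ⟨m, hm, hW, hb, rfl⟩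
      have hboth : Eb x a i k true ∧ Eb x a i k false := by
        cases hv : m.testBit i with
        | true =>
          rw [hv] at hEb
          refine ⟨hEb, ?_⟩
          by_contra hnF
          exact hnA ⟨hgt, hEb, hnF⟩
        | false =>
          rw [hv] at hEb
          refine ⟨?_, hEb⟩
          by_contra hnT
          exact hnB ⟨hgt, hEb, hnT⟩
      by_cases hkx : k ∈ x i
      · exact Eb_to_Mch hboth.1 hgt (fun _ => hkx) (by simp)
      · exact Eb_to_Mch hboth.2 hgt (by simp) (fun _ => hkx)

lemma sst_infinite {F : Set (Set ℕ)} (hr : #F < frakR) (hF : ∀ a ∈ F, a.Infinite)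
    {a : Set ℕ} (ha : a ∈ F) (i : ℕ) : (Sst (XX F) a i).Infinite := by
  induction i with
  | zero => exact sst_base (hF a ha) _
  | succ i ih => exact sst_step hr ha i ih

lemma exists_escape {D : Set (ℕ → ℕ)} (h : #D < frakD) :
    ∃ f : ℕ → ℕ, ∀ g ∈ D, ∃ᶠ n in atTop, g n < f n := by
  by_contra hc
  push_neg at hc
  have : frakD ≤ #D := by
    apply csInf_le'
    refine ⟨D, rfl, fun f => ?_⟩
    obtain ⟨g, hg, hfg⟩ := hc f
    refine ⟨g, hg, ?_⟩
    exact hfg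
  exact absurd h (not_lt.mpr this)

lemma key_hitting {F : Set (Set ℕ)} (hF : ∀ a ∈ F, a.Infinite)
    (hd : #F < frakD) (hr : #F < frakR) :
    ∃ g : ℕ → ℕ, (∀ k, g k ≤ k) ∧ Monotone g ∧ Tendsto g atTop atTop ∧
      ∀ a ∈ F, (a ∩ {m : ℕ | 1 ≤ m ∧ ∀ j < g (Nat.log 2 m),
        (m.testBit j = true ↔ Nat.log 2 m ∈ XX F j)}).Infinite := by
  classical
  set x := XX F with hx
  set Ψ : Set ℕ → ℕ → ℕ := fun a i => sInf {k | k ∈ Sst x a i ∧ i < k} with hΨdef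
  have hΨ : ∀ a ∈ F, ∀ i, Ψ a i ∈ Sst x a i ∧ i < Ψ a i := by
    intro a ha i
    have hne : {k | k ∈ Sst x a i ∧ i < k}.Nonempty := by
      obtain ⟨k, hk, hik⟩ := (sst_infinite hr hF ha i).exists_gt i
      exact ⟨k, hk, hik⟩
    exact Nat.sInf_mem hne
  -- escaping function
  have hcard : #(Ψ '' F) < frakD := lt_of_le_of_lt mk_image_le hd
  obtain ⟨G₀, hG₀⟩ := exists_escape hcard
  set G : ℕ → ℕ := fun i => (Finset.range (i+1)).sup G₀ + i + 1 with hGdef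
  have hG₀lt : ∀ i, G₀ i < G i := by
    intro i
    have h1 : G₀ i ≤ (Finset.range (i+1)).sup G₀ :=
      Finset.le_sup (Finset.self_mem_range_succ i)
    simp only [hGdef]
    omega
  have hGmono : Monotone G := by
    intro i i' hii
    have h1 : (Finset.range (i+1)).sup G₀ ≤ (Finset.range (i'+1)).sup G₀ :=
      Finset.sup_mono (Finset.range_subset_range.mpr (by omega))
    simp only [hGdef]
    omega
  have hGself : ∀ i, i + 1 ≤ G i := fun i => by simp only [hGdef]; omega
  set g : ℕ → ℕ := fun k => sInf {i | k ≤ G i} with hgdef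
  have hgne : ∀ k, ({i | k ≤ G i}).Nonempty := fun k => ⟨k, le_trans (Nat.le_succ k) (hGself k)⟩
  have hgmem : ∀ k, k ≤ G (g k) := fun k => Nat.sInf_mem (hgne k)
  have hgle : ∀ {k i}, k ≤ G i → g k ≤ i := fun h => Nat.sInf_le h
  have hgk : ∀ k, g k ≤ k := fun k => hgle (by have := hGself k; omega)
  have hgmono : Monotone g := fun k k' hkk => hgle (le_trans hkk (hgmem k'))
  have hgt : Tendsto g atTop atTop := by
    rw [Filter.tendsto_atTop]
    intro L
    rw [eventually_atTop]
    refine ⟨G L + 1, fun k hk => ?_⟩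
    by_contra h'
    push_neg at h'
    have h1 : g k ≤ L := by omega
    have := le_trans (hgmem k) (hGmono h1)
    omega
  refine ⟨g, hgk, hgmono, hgt, ?_⟩
  intro a ha
  apply Set.infinite_of_not_bddAbove
  rw [not_bddAbove_iff]
  intro N
  have hfreq := hG₀ (Ψ a) ⟨a, ha, rfl⟩
  rw [Filter.frequently_atTop] at hfreq
  obtain ⟨i, hiN, hilt⟩ := hfreq (N + 1)
  set k := Ψ a i with hkdef
  obtain ⟨hkS, hik⟩ := hΨ a ha i
  have hgki : g k ≤ i := hgle (le_trans (le_of_lt hilt) (le_of_lt (hG₀lt i)))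
  obtain ⟨m, hma, hmW, hbits⟩ := hkS
  have hm1 : 1 ≤ m := le_trans (Nat.one_le_two_pow) hmW.1
  have hlog : Nat.log 2 m = k := log_eq_of_mem_W hmW
  have hmini : min i k = i := by omega
  refine ⟨m, ⟨hma, hm1, ?_⟩, ?_⟩
  · intro j hj
    rw [hlog]
    rw [hlog] at hj
    exact hbits j (by omega)
  · -- N < m
    have h2k : k < 2^k := Nat.lt_two_pow_self
    have : 2^k ≤ m := hmW.1
    omega

-- window counting
lemma window_count {b : Set ℕ} {g : ℕ → ℕ} {x : ℕ → Set ℕ}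
    (hb : b = {m : ℕ | 1 ≤ m ∧ ∀ j < g (Nat.log 2 m), (m.testBit j = true ↔ Nat.log 2 m ∈ x j)})
    {k : ℕ} (hgk : g k ≤ k) :
    (Finset.filter (· ∈ b) (Finset.Ico (2^k) (2^(k+1)))).card ≤ 2^(k - g k) := by
  classical
  have hlog : ∀ m ∈ Finset.Ico (2^k) (2^(k+1)), Nat.log 2 m = k := by
    intro m hm
    rw [Finset.mem_Ico] at hm
    exact Nat.log_eq_of_pow_le_of_lt_pow hm.1 hm.2
  have hcard : (Finset.Ico (2^(k - g k)) (2^(k+1 - g k))).card = 2^(k - g k) := by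
    rw [Nat.card_Ico]
    have h1 : k + 1 - g k = (k - g k) + 1 := by omega
    rw [h1, pow_succ]
    omega
  rw [← hcard]
  apply Finset.card_le_card_of_injOn (fun m => m / 2^(g k))
  · intro m hm
    rw [Finset.mem_coe, Finset.mem_filter, Finset.mem_Ico] at hm
    rw [Finset.mem_coe, Finset.mem_Ico]
    have hpos : 0 < 2^(g k) := Nat.pow_pos (by norm_num)
    constructor
    · rw [Nat.le_div_iff_mul_le hpos, ← pow_add]
      have : k - g k + g k = k := by omega
      rw [this]; exact hm.1.1
    · rw [Nat.div_lt_iff_lt_mul hpos, ← pow_add]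
      have : k + 1 - g k + g k = k + 1 := by omega
      rw [this]; exact hm.1.2
  · intro m₁ hm₁ m₂ hm₂ hdiv
    simp only [Finset.coe_filter, Set.mem_setOf_eq, Finset.mem_Ico] at hm₁ hm₂
    have hl₁ := hlog m₁ (Finset.mem_Ico.mpr hm₁.1)
    have hl₂ := hlog m₂ (Finset.mem_Ico.mpr hm₂.1)
    have hb₁ := hm₁.2
    have hb₂ := hm₂.2
    rw [hb, Set.mem_setOf_eq, hl₁] at hb₁
    rw [hb, Set.mem_setOf_eq, hl₂] at hb₂
    have hmod : m₁ % 2^(g k) = m₂ % 2^(g k) := by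
      apply Nat.eq_of_testBit_eq
      intro j
      rw [Nat.testBit_mod_two_pow, Nat.testBit_mod_two_pow]
      by_cases hj : j < g k
      · simp only [hj, decide_true, Bool.true_and]
        have h1 := hb₁.2 j hj
        have h2 := hb₂.2 j hj
        by_cases hxj : k ∈ x j
        · rw [h1.mpr hxj, h2.mpr hxj]
        · have e1 : m₁.testBit j = false := by
            rcases Bool.eq_false_or_eq_true (m₁.testBit j) with h | h
            · exact absurd (h1.mp h) hxj
            · exact h
          have e2 : m₂.testBit j = false := by
            rcases Bool.eq_false_or_eq_true (m₂.testBit j) with h | h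
            · exact absurd (h2.mp h) hxj
            · exact h
          rw [e1, e2]
      · simp [hj]
    calc m₁ = 2^(g k) * (m₁ / 2^(g k)) + m₁ % 2^(g k) := (Nat.div_add_mod _ _).symm
    _ = 2^(g k) * (m₂ / 2^(g k)) + m₂ % 2^(g k) := by simp only at hdiv; rw [hdiv, hmod]
    _ = m₂ := Nat.div_add_mod _ _

lemma global_count {b : Set ℕ} {g : ℕ → ℕ} {x : ℕ → Set ℕ}
    (hb : b = {m : ℕ | 1 ≤ m ∧ ∀ j < g (Nat.log 2 m), (m.testBit j = true ↔ Nat.log 2 m ∈ x j)})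
    (hgk : ∀ k, g k ≤ k) (n : ℕ) :
    (b ∩ Set.Iio n).ncard ≤ ∑ k ∈ Finset.range (Nat.log 2 n + 1), 2^(k - g k) := by
  classical
  have heq : b ∩ Set.Iio n = ↑(Finset.filter (· ∈ b) (Finset.range n)) := by
    ext m
    simp only [Set.mem_inter_iff, Set.mem_Iio, Finset.coe_filter, Finset.mem_range,
      Set.mem_setOf_eq]
    tauto
  rw [heq, Set.ncard_coe_finset]
  have hsub : Finset.filter (· ∈ b) (Finset.range n) ⊆
      (Finset.range (Nat.log 2 n + 1)).biUnion
        (fun k => Finset.filter (· ∈ b) (Finset.Ico (2^k) (2^(k+1)))) := by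
    intro m hm
    rw [Finset.mem_filter, Finset.mem_range] at hm
    have hm1 : 1 ≤ m := by
      rw [hb, Set.mem_setOf_eq] at hm
      exact hm.2.1
    rw [Finset.mem_biUnion]
    refine ⟨Nat.log 2 m, ?_, ?_⟩
    · rw [Finset.mem_range]
      have := Nat.log_mono_right (le_of_lt hm.1) (b := 2)
      omega
    · rw [Finset.mem_filter, Finset.mem_Ico]
      exact ⟨⟨Nat.pow_log_le_self 2 (by omega), Nat.lt_pow_succ_log_self (by norm_num) m⟩, hm.2⟩
  calc (Finset.filter (· ∈ b) (Finset.range n)).card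
      ≤ _ := Finset.card_le_card hsub
    _ ≤ ∑ k ∈ Finset.range (Nat.log 2 n + 1),
          (Finset.filter (· ∈ b) (Finset.Ico (2^k) (2^(k+1)))).card := Finset.card_biUnion_le
    _ ≤ ∑ k ∈ Finset.range (Nat.log 2 n + 1), 2^(k - g k) := by
        apply Finset.sum_le_sum
        intro k _
        exact window_count hb (hgk k)

lemma sum_geom_real (J : ℕ) : ∑ k ∈ Finset.range J, (2:ℝ)^k = 2^J - 1 := by
  induction J with
  | zero => simp
  | succ J ih => rw [Finset.sum_range_succ, ih, pow_succ]; ring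

lemma sum_tendsto {g : ℕ → ℕ} (hgk : ∀ k, g k ≤ k) (hgt : Tendsto g atTop atTop) :
    Tendsto (fun K : ℕ => ((∑ k ∈ Finset.range (K+1), 2^(k - g k) : ℕ) : ℝ) / 2^K)
      atTop (nhds 0) := by
  rw [Metric.tendsto_atTop]
  intro ε hε
  -- choose L with 2/2^L < ε/2
  obtain ⟨L, hL⟩ := pow_unbounded_of_one_lt (4/ε) (one_lt_two)
  have hL2 : (2:ℝ)/2^L < ε/2 := by
    have h4 : (0:ℝ) < 4/ε := by positivity
    rw [div_lt_div_iff₀ (by positivity) (by norm_num)]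
    rw [div_lt_iff₀ hε] at hL  -- 4 < 2^L * ε
    linarith
  -- choose J with g k ≥ L for k ≥ J
  have hev := hgt.eventually (eventually_ge_atTop L)
  rw [eventually_atTop] at hev
  obtain ⟨J, hJ⟩ := hev
  -- choose N with 2^J/2^N < ε/2
  obtain ⟨N₀, hN₀⟩ := pow_unbounded_of_one_lt ((2:ℝ)^J/(ε/2)) (one_lt_two)
  set N := max N₀ J with hN
  have hNbound : (2:ℝ)^J/2^N < ε/2 := by
    have hmono : (2:ℝ)^N₀ ≤ 2^N := by
      apply pow_le_pow_right₀ (by norm_num)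
      omega
    have h1 : (2:ℝ)^J/(ε/2) < 2^N := lt_of_lt_of_le hN₀ hmono
    rw [div_lt_iff₀ (by positivity)] at h1
    rw [div_lt_iff₀ (by positivity)]
    linarith
  refine ⟨N, fun K hK => ?_⟩
  have hJK : J ≤ K + 1 := by omega
  -- bound the natural sum, cast to ℝ
  have hcast : ((∑ k ∈ Finset.range (K+1), 2^(k - g k) : ℕ) : ℝ)
      = ∑ k ∈ Finset.range (K+1), (2:ℝ)^(k - g k) := by
    push_cast
    rfl
  have hsplit : ∑ k ∈ Finset.range (K+1), (2:ℝ)^(k - g k)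
      = ∑ k ∈ Finset.range J, (2:ℝ)^(k - g k) + ∑ k ∈ Finset.Ico J (K+1), (2:ℝ)^(k - g k) :=
    (Finset.sum_range_add_sum_Ico _ hJK).symm
  have hpart1 : ∑ k ∈ Finset.range J, (2:ℝ)^(k - g k) ≤ 2^J := by
    calc ∑ k ∈ Finset.range J, (2:ℝ)^(k - g k)
        ≤ ∑ k ∈ Finset.range J, (2:ℝ)^k := by
          apply Finset.sum_le_sum
          intro k _
          exact pow_le_pow_right₀ (by norm_num) (by omega)
      _ = 2^J - 1 := sum_geom_real J
      _ ≤ 2^J := by linarith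
  have hpart2 : ∑ k ∈ Finset.Ico J (K+1), (2:ℝ)^(k - g k) ≤ 2^(K+1)/2^L := by
    calc ∑ k ∈ Finset.Ico J (K+1), (2:ℝ)^(k - g k)
        ≤ ∑ k ∈ Finset.Ico J (K+1), (2:ℝ)^k/2^L := by
          apply Finset.sum_le_sum
          intro k hk
          rw [Finset.mem_Ico] at hk
          have hgkL : L ≤ g k := hJ k hk.1
          have h1 : (2:ℝ)^(k - g k) ≤ (2:ℝ)^(k - L) :=
            pow_le_pow_right₀ (by norm_num) (by omega)
          have h2 : (2:ℝ)^(k - L) = 2^k/2^L := by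
            rw [eq_div_iff (by positivity), ← pow_add]
            congr 1
            have := hgk k
            omega
          rw [← h2]; exact h1
      _ = (∑ k ∈ Finset.Ico J (K+1), (2:ℝ)^k)/2^L := by rw [Finset.sum_div]
      _ ≤ (2^(K+1) - 1)/2^L := by
          apply div_le_div_of_nonneg_right ?_ (by positivity)
          calc ∑ k ∈ Finset.Ico J (K+1), (2:ℝ)^k
              ≤ ∑ k ∈ Finset.range (K+1), (2:ℝ)^k := by
                apply Finset.sum_le_sum_of_subset_of_nonneg
                · intro k hk
                  rw [Finset.mem_Ico] at hk
                  rw [Finset.mem_range]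
                  omega
                · intro k _ _
                  positivity
            _ = 2^(K+1) - 1 := sum_geom_real (K+1)
      _ ≤ 2^(K+1)/2^L := by
          apply div_le_div_of_nonneg_right ?_ (by positivity)
          linarith
  -- assemble
  have hT : ((∑ k ∈ Finset.range (K+1), 2^(k - g k) : ℕ) : ℝ) ≤ 2^J + 2^(K+1)/2^L := by
    rw [hcast, hsplit]
    linarith
  have hKN : (2:ℝ)^N ≤ 2^K := pow_le_pow_right₀ (by norm_num) hK
  have hfinal : ((∑ k ∈ Finset.range (K+1), 2^(k - g k) : ℕ) : ℝ)/2^K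
      ≤ 2^J/2^N + 2/2^L := by
    calc ((∑ k ∈ Finset.range (K+1), 2^(k - g k) : ℕ) : ℝ)/2^K
        ≤ (2^J + 2^(K+1)/2^L)/2^K := by
          apply div_le_div_of_nonneg_right hT (by positivity)
      _ = 2^J/2^K + 2/2^L := by
          rw [pow_succ]
          field_simp
      _ ≤ 2^J/2^N + 2/2^L := by
          have := div_le_div_of_nonneg_left (by positivity : (0:ℝ) ≤ 2^J)
            (by positivity : (0:ℝ) < 2^N) hKN
          linarith
  rw [Real.dist_eq, sub_zero, abs_of_nonneg (by positivity)]
  calc ((∑ k ∈ Finset.range (K+1), 2^(k - g k) : ℕ) : ℝ)/2^K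
      ≤ 2^J/2^N + 2/2^L := hfinal
    _ < ε/2 + ε/2 := by exact add_lt_add hNbound hL2
    _ = ε := by ring


lemma tendsto_log2_atTop : Tendsto (fun n => Nat.log 2 n) atTop atTop := by
  rw [Filter.tendsto_atTop]
  intro L
  rw [eventually_atTop]
  refine ⟨2^L, fun n hn => ?_⟩
  have hn1 : n ≠ 0 := by
    have := Nat.one_le_two_pow (n := L)
    omega
  rw [Nat.le_log_iff_pow_le (by norm_num) hn1]
  exact hn

lemma density_zero_b {g : ℕ → ℕ} {x : ℕ → Set ℕ} (hgk : ∀ k, g k ≤ k)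
    (hgt : Tendsto g atTop atTop) :
    DensityZero {m : ℕ | 1 ≤ m ∧ ∀ j < g (Nat.log 2 m),
      (m.testBit j = true ↔ Nat.log 2 m ∈ x j)} := by
  set b : Set ℕ := {m : ℕ | 1 ≤ m ∧ ∀ j < g (Nat.log 2 m),
      (m.testBit j = true ↔ Nat.log 2 m ∈ x j)} with hb
  rw [DensityZero]
  apply tendsto_of_tendsto_of_tendsto_of_le_of_le' (g := fun _ : ℕ => (0:ℝ))
    (h := fun n : ℕ => ((∑ k ∈ Finset.range (Nat.log 2 n + 1), 2^(k - g k) : ℕ) : ℝ)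
      / 2^(Nat.log 2 n))
  · exact tendsto_const_nhds
  · exact (sum_tendsto hgk hgt).comp tendsto_log2_atTop
  · filter_upwards with n
    positivity
  · rw [eventually_atTop]
    refine ⟨1, fun n hn => ?_⟩
    have hcount := global_count hb hgk n
    have hnpos : (0:ℝ) < n := by exact_mod_cast hn
    have hpow : (2:ℝ)^(Nat.log 2 n) ≤ n := by
      have := Nat.pow_log_le_self 2 (show n ≠ 0 by omega)
      exact_mod_cast this
    calc ((b ∩ Set.Iio n).ncard : ℝ) / n
        ≤ ((∑ k ∈ Finset.range (Nat.log 2 n + 1), 2^(k - g k) : ℕ) : ℝ) / n := by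
          apply div_le_div_of_nonneg_right ?_ (le_of_lt hnpos)
          exact_mod_cast hcount
      _ ≤ ((∑ k ∈ Finset.range (Nat.log 2 n + 1), 2^(k - g k) : ℕ) : ℝ)
          / 2^(Nat.log 2 n) := by
          apply div_le_div_of_nonneg_left (by positivity) (by positivity) hpow

theorem key {F : Set (Set ℕ)} (hF : ∀ a ∈ F, a.Infinite)
    (hd : #F < frakD) (hr : #F < frakR) :
    ∃ b : Set ℕ, DensityZero b ∧ ∀ a ∈ F, (a ∩ b).Infinite := by
  obtain ⟨g, hgk, hgmono, hgt, hhit⟩ := key_hitting hF hd hr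
  exact ⟨_, density_zero_b hgk hgt, hhit⟩

lemma ncard_Ico' (a b : ℕ) : (Set.Ico a b).ncard = b - a := by
  rw [← Finset.coe_Ico, Set.ncard_coe_finset, Nat.card_Ico]

lemma compl_infinite_of_densityZero {b : Set ℕ} (hb : DensityZero b) : bᶜ.Infinite := by
  by_contra hfin'
  rw [Set.not_infinite] at hfin'
  obtain ⟨N, hN⟩ : ∃ N, bᶜ ⊆ Set.Iio N := by
    rcases hfin'.bddAbove with ⟨M, hM⟩
    exact ⟨M + 1, fun y hy => Nat.lt_succ_of_le (hM hy)⟩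
  have hev := hb.eventually (gt_mem_nhds (by norm_num : (0:ℝ) < 1/2))
  rw [eventually_atTop] at hev
  obtain ⟨n₀, hn₀⟩ := hev
  set n := max (n₀ + 1) (4 * (N + 1)) with hn
  have h1 : ((b ∩ Set.Iio n).ncard : ℝ) / n < 1/2 :=
    hn₀ n (le_trans (Nat.le_succ _) (le_max_left _ _))
  have hsub : Set.Ico N n ⊆ b ∩ Set.Iio n := by
    intro m hm
    exact ⟨by by_contra hmb; exact absurd (hN hmb) (not_lt.mpr hm.1), hm.2⟩
  have hcard : (n - N : ℕ) ≤ (b ∩ Set.Iio n).ncard := by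
    have := Set.ncard_le_ncard hsub ((Set.finite_Iio n).inter_of_right _)
    rwa [ncard_Ico'] at this
  have hnN : 4 * (N + 1) ≤ n := le_max_right _ _
  have hpos : (0:ℝ) < (n:ℝ) := by
    have : 0 < n := lt_of_lt_of_le (by omega) hnN
    exact_mod_cast this
  rw [div_lt_iff₀ hpos] at h1
  have hNn : N ≤ n := by omega
  have hcast : ((n : ℝ) - N) ≤ ((n - N : ℕ) : ℝ) := by rw [Nat.cast_sub hNn]
  have h2 : ((n - N : ℕ) : ℝ) ≤ ((b ∩ Set.Iio n).ncard : ℝ) := by exact_mod_cast hcard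
  have h3 : (4 * (N+1) : ℝ) ≤ n := by exact_mod_cast hnN
  linarith

/-- `min {𝔡, 𝔯} ≤ non*(Z₀)`. -/
theorem stmt2 : min frakD frakR ≤ nonStarZ0 := by
  rw [nonStarZ0]
  apply le_csInf
  · -- the defining set is nonempty
    refine ⟨#{a : Set ℕ | a.Infinite}, {a : Set ℕ | a.Infinite}, rfl, fun a ha => ha, ?_⟩
    intro b hb
    exact ⟨bᶜ, compl_infinite_of_densityZero hb, by simp⟩
  · rintro κ ⟨F, hFc, hFinf, hFwit⟩
    by_contra hlt
    push_neg at hlt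
    rw [lt_min_iff] at hlt
    rw [← hFc] at hlt
    obtain ⟨b, hbdz, hbhit⟩ := key hFinf hlt.1 hlt.2
    obtain ⟨a, ha, hafin⟩ := hFwit b hbdz
    exact (hbhit a ha) hafin
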